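/- Let i be a nonnegative integer and let α, β be complex numbers with β ≠ 0. Assume that (β)_{m+n} and (α/2)_n are nonzero for all nonnegative integers m, n, that no argument of Γ appearing on the right-hand side below is a nonpositive integer, and that the double series defining the Kampé de Fériet function converges absolutely. Then F^{1:1;2}_{1:0;1}[α : β/2+2−i ; β/2−2+i, α/2+1 ; β : — ; α/2 ; 1/2, 1/2] = 2^{α+3−i} / β · Σ_{r=0}^{i} C(i,r) · Γ(β/4+(r+1)/2) / Γ(β/4+(r−1)/2). -/

import Mathlib

open Complex

noncomputable section

/-- Pochhammer symbol `(a)_n = a (a+1) ⋯ (a+n-1)`. -/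
def poch (a : ℂ) (n : ℕ) : ℂ := ∏ k ∈ Finset.range n, (a + k)

/-- `z` is not a nonpositive integer. -/
def notNonposInt (z : ℂ) : Prop := ∀ n : ℕ, z ≠ -(n : ℂ)

/-- Term of the Kampé de Fériet double series `F^{1:1;2}_{1:0;1}`. -/
def kdfTerm (α ε b₁ b₂ β d₁ x y : ℂ) (p : ℕ × ℕ) : ℂ :=
  poch α (p.1 + p.2) * poch ε p.1 * poch b₁ p.2 * poch b₂ p.2 /
    (poch β (p.1 + p.2) * poch d₁ p.2) * x ^ p.1 * y ^ p.2 /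
    ((p.1.factorial : ℂ) * (p.2.factorial : ℂ))

open Finset

/-- real version -/
def rpoch (a : ℝ) (n : ℕ) : ℝ := ∏ k ∈ Finset.range n, (a + k)

lemma poch_zero (a : ℂ) : poch a 0 = 1 := by simp [poch]

lemma poch_succ_right (a : ℂ) (n : ℕ) : poch a (n+1) = poch a n * (a + n) :=
  Finset.prod_range_succ _ _

lemma poch_succ_left (a : ℂ) (n : ℕ) : poch a (n+1) = a * poch (a+1) n := by
  rw [poch, Finset.prod_range_succ']
  simp only [Nat.cast_zero, add_zero, mul_comm, poch]
  congr 1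
  apply Finset.prod_congr rfl
  intro k _
  push_cast
  ring

lemma rpoch_succ_left (a : ℝ) (n : ℕ) : rpoch a (n+1) = a * rpoch (a+1) n := by
  rw [rpoch, Finset.prod_range_succ']
  simp only [Nat.cast_zero, add_zero, mul_comm, rpoch]
  congr 1
  apply Finset.prod_congr rfl
  intro k _
  push_cast
  ring

lemma rpoch_pos {a : ℝ} (ha : 0 < a) (n : ℕ) : 0 < rpoch a n :=
  Finset.prod_pos fun k _ => by positivity

lemma norm_poch_le (a : ℂ) (n : ℕ) : ‖poch a n‖ ≤ rpoch (‖a‖ + 1) n := by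
  rw [poch, norm_prod]
  apply Finset.prod_le_prod (fun k _ => norm_nonneg _)
  intro k _
  calc ‖a + (k:ℂ)‖ ≤ ‖a‖ + ‖(k:ℂ)‖ := norm_add_le _ _
    _ ≤ ‖a‖ + 1 + k := by
        rw [Complex.norm_natCast]
        linarith

lemma poch_div_poch (c : ℂ) (hc : ∀ m, poch c m ≠ 0) (m : ℕ) :
    poch (c+1) m / poch c m = (c + m) / c := by
  have h0 : c ≠ 0 := by simpa [poch] using hc 1
  have h1 : c * poch (c+1) m = poch c m * (c + m) := by
    rw [← poch_succ_left, poch_succ_right]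
  rw [div_eq_div_iff (hc m) h0]
  linear_combination h1

/-- Ratio test core summability. -/
lemma summable_rpoch {r q : ℝ} (hr : 0 < r) (hq : 0 < q) (hq1 : q < 1) :
    Summable (fun n : ℕ => rpoch r n / n.factorial * q ^ n) := by
  apply summable_of_ratio_test_tendsto_lt_one hq1
  · filter_upwards with n
    have h1 := rpoch_pos hr n
    have h2 : (0:ℝ) < n.factorial := by positivity
    positivity
  · have key : ∀ n : ℕ, ‖rpoch r (n+1) / (n+1).factorial * q ^ (n+1)‖ /
        ‖rpoch r n / n.factorial * q ^ n‖ = (r + n) / (n + 1) * q := by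
      intro n
      have h1 := rpoch_pos hr n
      have h1' := rpoch_pos hr (n+1)
      have h2 : (0:ℝ) < n.factorial := by positivity
      have hrn : (0:ℝ) < r + n := by positivity
      rw [Real.norm_of_nonneg (by positivity), Real.norm_of_nonneg (by positivity)]
      rw [rpoch, Finset.prod_range_succ, ← rpoch, Nat.factorial_succ]
      field_simp
      push_cast
      ring
    simp_rw [key]
    have h3 : Filter.Tendsto (fun n : ℕ => (r-1) * (1/(n+1)) + 1) Filter.atTop
        (nhds ((r-1)*0 + 1)) :=
      (tendsto_one_div_add_atTop_nhds_zero_nat.const_mul _).add tendsto_const_nhds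
    have h4 : (fun n : ℕ => (r-1) * (1/(n+1)) + 1) = fun n : ℕ => (r + n) / (n + 1) := by
      funext n
      have : (n:ℝ) + 1 ≠ 0 := by positivity
      field_simp
      ring

    rw [h4] at h3
    simpa using h3.mul_const q

open Filter in
lemma summable_aux (a : ℂ) {z : ℂ} (hz : ‖z‖ ≤ 3/4) :
    Summable (fun n : ℕ => poch a n / n.factorial * z ^ n) := by
  apply Summable.of_norm
  apply Summable.of_nonneg_of_le (fun n => norm_nonneg _) _
    (summable_rpoch (r := ‖a‖+1) (by positivity) (q := 3/4) (by norm_num) (by norm_num))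
  intro n
  rw [norm_mul, norm_div, norm_pow, Complex.norm_natCast]
  have h2 : (0:ℝ) < n.factorial := by positivity
  have hp := (rpoch_pos (show (0:ℝ) < ‖a‖+1 by positivity) n).le
  exact mul_le_mul (by gcongr; exact norm_poch_le a n)
    (pow_le_pow_left₀ (norm_nonneg z) hz n) (by positivity) (by positivity)

lemma summable_aux' (a : ℂ) {z : ℂ} (hz : ‖z‖ ≤ 3/4) :
    Summable (fun n : ℕ => poch a (n+1) / n.factorial * z ^ n) := by
  apply Summable.of_norm
  have hsum := (summable_rpoch (r := ‖a‖+2) (by positivity) (q := 3/4) (by norm_num)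
      (by norm_num)).mul_left (‖a‖+1)
  apply Summable.of_nonneg_of_le (fun n => norm_nonneg _) _ hsum
  intro n
  rw [norm_mul, norm_div, norm_pow, Complex.norm_natCast]
  have h2 : (0:ℝ) < n.factorial := by positivity
  have h3 : ‖poch a (n+1)‖ ≤ (‖a‖+1) * rpoch (‖a‖+2) n := by
    have := norm_poch_le a (n+1)
    rwa [rpoch_succ_left, show ‖a‖+1+1 = ‖a‖+2 by ring] at this
  calc ‖poch a (n+1)‖ / n.factorial * ‖z‖^n
      ≤ ((‖a‖+1) * rpoch (‖a‖+2) n) / n.factorial * (3/4)^n := by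
        have hp := (rpoch_pos (show (0:ℝ) < ‖a‖+2 by positivity) n).le
        exact mul_le_mul (by gcongr) (pow_le_pow_left₀ (norm_nonneg z) hz n)
          (by positivity) (by positivity)
    _ = (‖a‖+1) * (rpoch (‖a‖+2) n / n.factorial * (3/4)^n) := by ring

lemma summable_u (a : ℂ) :
    Summable (fun n : ℕ => rpoch (‖a‖+1) n / n.factorial * n * (3/4:ℝ)^(n-1)) := by
  rw [← summable_nat_add_iff 1]
  have hsum := (summable_rpoch (r := ‖a‖+2) (by positivity) (q := 3/4) (by norm_num)
      (by norm_num)).mul_left (‖a‖+1)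
  apply hsum.congr
  intro n
  have h2 : (0:ℝ) < n.factorial := by positivity
  rw [rpoch_succ_left, show ‖a‖+1+1 = ‖a‖+2 by ring]
  rw [Nat.add_sub_cancel, Nat.factorial_succ]
  push_cast
  field_simp

lemma summable_w (a : ℂ) {z : ℂ} (hz : ‖z‖ ≤ 3/4) :
    Summable (fun n : ℕ => (n:ℂ) * (poch a n / n.factorial) * z ^ n) := by
  apply Summable.of_norm
  apply Summable.of_nonneg_of_le (fun n => norm_nonneg _) _ (summable_u a)
  intro n
  rw [norm_mul, norm_mul, norm_div, norm_pow, Complex.norm_natCast, Complex.norm_natCast]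
  have h2 : (0:ℝ) < n.factorial := by positivity
  calc (n:ℝ) * (‖poch a n‖ / n.factorial) * ‖z‖^n
      ≤ (n:ℝ) * (rpoch (‖a‖+1) n / n.factorial) * (3/4)^n := by
        have hp := (rpoch_pos (show (0:ℝ) < ‖a‖+1 by positivity) n).le
        exact mul_le_mul (by gcongr; exact norm_poch_le a n)
          (pow_le_pow_left₀ (norm_nonneg z) hz n) (by positivity) (by positivity)
    _ ≤ rpoch (‖a‖+1) n / n.factorial * n * (3/4)^(n-1) := by
        rcases n with _ | m
        · simp
        · rw [Nat.add_sub_cancel, pow_succ]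
          have hp := rpoch_pos (a := ‖a‖+1) (by positivity) (m+1)
          have : (0:ℝ) ≤ rpoch (‖a‖+1) (m+1) / (m+1).factorial * (m+1) * (3/4)^m := by
            positivity
          nlinarith [pow_pos (show (0:ℝ) < 3/4 by norm_num) m]

lemma re_pos_of_mem_ball {y : ℂ} (hy : y ∈ Metric.ball (0:ℂ) (3/4)) : 0 < (1 - y).re := by
  have h1 : ‖y‖ < 3/4 := by simpa [Metric.mem_ball] using hy
  have h2 : |y.re| ≤ ‖y‖ := Complex.abs_re_le_norm y
  simp only [Complex.sub_re, Complex.one_re]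
  have := abs_le.mp h2
  linarith

lemma one_sub_ne_zero_of_mem_ball {y : ℂ} (hy : y ∈ Metric.ball (0:ℂ) (3/4)) : 1 - y ≠ 0 := by
  intro h
  have := re_pos_of_mem_ball hy
  rw [h] at this
  simp at this

theorem hasSum_binomial (a : ℂ) :
    HasSum (fun n : ℕ => poch a n / n.factorial * (1/2:ℂ)^n) ((2:ℂ)^a) := by
  set t : Set ℂ := Metric.ball (0:ℂ) (3/4) with ht_def
  set f : ℂ → ℂ := fun z => ∑' n : ℕ, poch a n / n.factorial * z ^ n with hf_def
  have ht : IsOpen t := Metric.isOpen_ball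
  have h't : IsPreconnected t := (convex_ball (0:ℂ) (3/4)).isPreconnected
  have hmem : ∀ {y : ℂ}, y ∈ t → ‖y‖ ≤ 3/4 := by
    intro y hy
    have : ‖y‖ < 3/4 := by simpa [ht_def, Metric.mem_ball] using hy
    linarith
  -- derivative of f
  have hD : ∀ y ∈ t, HasDerivAt f (∑' n : ℕ, poch a n / n.factorial * ((n:ℂ) * y ^ (n-1))) y := by
    intro y hy
    apply hasDerivAt_tsum_of_isPreconnected (summable_u a) ht h't
      (g := fun n z => poch a n / n.factorial * z ^ n)
      (g' := fun n z => poch a n / n.factorial * ((n:ℂ) * z ^ (n-1)))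
    · intro n z _
      exact (hasDerivAt_pow n z).const_mul _
    · intro n z hz
      rw [norm_mul, norm_mul, norm_div, norm_pow, Complex.norm_natCast, Complex.norm_natCast]
      have h2 : (0:ℝ) < n.factorial := by positivity
      have hzn : ‖z‖ ^ (n-1) ≤ (3/4:ℝ) ^ (n-1) := pow_le_pow_left₀ (norm_nonneg z) (hmem hz) _
      have hb := norm_poch_le a n
      have hp := (rpoch_pos (show (0:ℝ) < ‖a‖+1 by positivity) n).le
      calc ‖poch a n‖ / n.factorial * ((n:ℝ) * ‖z‖^(n-1))
          ≤ rpoch (‖a‖+1) n / n.factorial * ((n:ℝ) * (3/4)^(n-1)) := by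
            exact mul_le_mul (by gcongr) (by gcongr) (by positivity) (by positivity)
        _ = rpoch (‖a‖+1) n / n.factorial * n * (3/4)^(n-1) := by ring
    · exact Metric.mem_ball_self (by norm_num)
    · exact summable_aux a (by norm_num)
    · exact hy
  -- the ODE : (1-y) * D = a * f y
  have key : ∀ y ∈ t, (1 - y) * (∑' n : ℕ, poch a n / n.factorial * ((n:ℂ) * y ^ (n-1))) =
      a * f y := by
    intro y hy
    have hyn := hmem hy
    have hs1 : Summable (fun n : ℕ => poch a n / n.factorial * ((n:ℂ) * y ^ (n-1))) := by
      apply Summable.of_norm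
      apply Summable.of_nonneg_of_le (fun n => norm_nonneg _) _ (summable_u a)
      intro n
      rw [norm_mul, norm_mul, norm_div, norm_pow, Complex.norm_natCast, Complex.norm_natCast]
      have h2 : (0:ℝ) < n.factorial := by positivity
      have hzn : ‖y‖ ^ (n-1) ≤ (3/4:ℝ) ^ (n-1) := pow_le_pow_left₀ (norm_nonneg y) hyn _
      have hb := norm_poch_le a n
      have hp := (rpoch_pos (show (0:ℝ) < ‖a‖+1 by positivity) n).le
      calc ‖poch a n‖ / n.factorial * ((n:ℝ) * ‖y‖^(n-1))
          ≤ rpoch (‖a‖+1) n / n.factorial * ((n:ℝ) * (3/4)^(n-1)) :=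
            mul_le_mul (by gcongr) (by gcongr) (by positivity) (by positivity)
        _ = rpoch (‖a‖+1) n / n.factorial * n * (3/4)^(n-1) := by ring
    have hsS : Summable (fun n : ℕ => poch a (n+1) / n.factorial * y ^ n) := summable_aux' a hyn
    have hsw : Summable (fun n : ℕ => (n:ℂ) * (poch a n / n.factorial) * y ^ n) := summable_w a hyn
    have hsc : Summable (fun n : ℕ => poch a n / n.factorial * y ^ n) := summable_aux a hyn
    -- D = sum of shifted series
    have step1 : (∑' n : ℕ, poch a n / n.factorial * ((n:ℂ) * y ^ (n-1))) =
        ∑' n : ℕ, poch a (n+1) / n.factorial * y ^ n := by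
      rw [Summable.tsum_eq_zero_add hs1]
      simp only [Nat.cast_zero, zero_mul, mul_zero, zero_add, Nat.cast_succ, Nat.add_sub_cancel]
      congr 1
      funext n
      have hfac : ((n:ℂ)+1) ≠ 0 := Nat.cast_add_one_ne_zero n
      have : ((n+1).factorial : ℂ) = ((n:ℂ)+1) * n.factorial := by
        rw [Nat.factorial_succ]; push_cast; ring
      rw [this]
      have hf2 : (n.factorial : ℂ) ≠ 0 := by exact_mod_cast n.factorial_ne_zero
      field_simp
    -- shifted w
    have step5 : (∑' n : ℕ, (n:ℂ) * (poch a n / n.factorial) * y ^ n) =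
        y * ∑' n : ℕ, poch a (n+1) / n.factorial * y ^ n := by
      rw [Summable.tsum_eq_zero_add hsw]
      simp only [Nat.cast_zero, zero_mul, zero_add, Nat.cast_succ]
      rw [← tsum_mul_left]
      congr 1
      funext n
      have : ((n+1).factorial : ℂ) = ((n:ℂ)+1) * n.factorial := by
        rw [Nat.factorial_succ]; push_cast; ring
      rw [this]
      have hfac : ((n:ℂ)+1) ≠ 0 := Nat.cast_add_one_ne_zero n
      have hf2 : (n.factorial : ℂ) ≠ 0 := by exact_mod_cast n.factorial_ne_zero
      field_simp
      ring
    have step6 : (∑' n : ℕ, poch a (n+1) / n.factorial * y ^ n) =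
        a * f y + y * ∑' n : ℕ, poch a (n+1) / n.factorial * y ^ n := by
      have hterm : ∀ n : ℕ, poch a (n+1) / n.factorial * y ^ n =
          a * (poch a n / n.factorial * y ^ n) + (n:ℂ) * (poch a n / n.factorial) * y ^ n := by
        intro n
        rw [poch_succ_right]
        ring
      calc (∑' n : ℕ, poch a (n+1) / n.factorial * y ^ n)
          = ∑' n : ℕ, (a * (poch a n / n.factorial * y ^ n) +
              (n:ℂ) * (poch a n / n.factorial) * y ^ n) := by
            congr 1; funext n; exact hterm n
        _ = a * f y + y * ∑' n : ℕ, poch a (n+1) / n.factorial * y ^ n := by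
            rw [Summable.tsum_add (hsc.mul_left a) hsw, tsum_mul_left, step5]
    rw [step1]
    linear_combination step6
  -- the function g is constant
  set g : ℂ → ℂ := fun z => (1 - z) ^ a * f z with hg_def
  have hgd : ∀ y ∈ t, HasDerivAt g 0 y := by
    intro y hy
    have hne := one_sub_ne_zero_of_mem_ball hy
    have h1 : HasDerivAt (fun z : ℂ => (1 - z) ^ a) (a * (1-y)^(a-1) * (-1)) y := by
      apply HasDerivAt.cpow_const ((hasDerivAt_id y).const_sub 1)
      exact Or.inl (re_pos_of_mem_ball hy)
    have h2 := hD y hy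
    have := h1.mul h2
    refine this.congr_deriv ?_
    have hsplit : (1-y)^a = (1-y)^(a-1) * (1-y) := by
      conv_lhs => rw [show a = (a-1) + 1 by ring]
      rw [Complex.cpow_add _ _ hne, Complex.cpow_one]
    rw [hsplit]
    have := key y hy
    linear_combination ((1-y)^(a-1)) * this
  have hconst : g (1/2) = g 0 := by
    apply (convex_ball (0:ℂ) (3/4)).is_const_of_fderivWithin_eq_zero
      (fun y hy => (hgd y hy).differentiableAt.differentiableWithinAt)
    · intro y hy
      rw [fderivWithin_of_isOpen ht hy]
      rw [(hgd y hy).hasFDerivAt.fderiv]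
      ext w
      simp
    · rw [Metric.mem_ball, dist_zero_right,
        show (1/2:ℂ) = ((1/2:ℝ):ℂ) by norm_num, Complex.norm_real]
      norm_num
    · exact Metric.mem_ball_self (by norm_num)
  have hf0 : f 0 = 1 := by
    have hrfl : f 0 = ∑' n : ℕ, poch a n / n.factorial * (0:ℂ)^n := rfl
    rw [hrfl, tsum_eq_single 0]
    · simp [poch_zero]
    · intro n hn
      simp [zero_pow hn]
  have hval : g 0 = 1 := by
    simp [hg_def, hf0, Complex.one_cpow]
  have harg : ((2:ℂ)).arg ≠ Real.pi := by
    rw [show (2:ℂ) = ((2:ℝ):ℂ) by norm_num, Complex.arg_ofReal_of_nonneg (by norm_num)]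
    exact Ne.symm Real.pi_ne_zero
  have hhalf : ((1:ℂ)/2) ^ a = ((2:ℂ)^a)⁻¹ := by
    rw [show (1:ℂ)/2 = (2:ℂ)⁻¹ by norm_num, Complex.inv_cpow _ _ harg]
  have h2a : (2:ℂ)^a ≠ 0 := by
    rw [Ne, Complex.cpow_eq_zero_iff]
    push_neg
    intro h
    norm_num at h
  have hfval : f (1/2) = (2:ℂ)^a := by
    have : g (1/2) = 1 := hconst.trans hval
    rw [hg_def] at this
    simp only at this
    rw [show (1:ℂ) - 1/2 = 1/2 by norm_num, hhalf] at this
    field_simp at this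
    linear_combination this
  have hn12 : ‖(1/2:ℂ)‖ ≤ 3/4 := by
    rw [show (1/2:ℂ) = ((1/2:ℝ):ℂ) by norm_num, Complex.norm_real]
    norm_num
  have hS : HasSum (fun n : ℕ => poch a n / n.factorial * (1/2:ℂ)^n) (f (1/2)) :=
    (summable_aux a hn12).hasSum
  rwa [hfval] at hS

lemma vand (a b : ℂ) : ∀ N : ℕ,
    ∑ k ∈ range (N+1), (N.choose k : ℂ) * poch a k * poch b (N-k) = poch (a+b) N := by
  intro N
  induction N with
  | zero => simp [poch_zero]
  | succ N ih =>
    rw [Finset.sum_range_succ']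
    have hsplit : ∀ j ∈ range (N+1),
        ((N+1).choose (j+1) : ℂ) * poch a (j+1) * poch b (N+1-(j+1)) =
        (N.choose j : ℂ) * poch a (j+1) * poch b (N-j) +
        (N.choose (j+1) : ℂ) * poch a (j+1) * poch b (N-j) := by
      intro j _
      rw [Nat.choose_succ_succ, Nat.succ_sub_succ]
      push_cast
      ring
    rw [Finset.sum_congr rfl hsplit, Finset.sum_add_distrib]
    have hB' : ∑ k ∈ range (N+1), (N.choose k : ℂ) * poch a k * poch b (N+1-k) =
        (∑ j ∈ range N, (N.choose (j+1) : ℂ) * poch a (j+1) * poch b (N-j)) +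
        poch b (N+1) := by
      rw [Finset.sum_range_succ']
      simp [Nat.succ_sub_succ, poch_zero]
    have hB2 : ∑ j ∈ range (N+1), (N.choose (j+1) : ℂ) * poch a (j+1) * poch b (N-j) =
        ∑ j ∈ range N, (N.choose (j+1) : ℂ) * poch a (j+1) * poch b (N-j) := by
      rw [Finset.sum_range_succ, Nat.choose_succ_self]
      simp
    have hab : ∀ k ∈ range (N+1),
        (N.choose k : ℂ) * poch a k * poch b (N+1-k) =
        (N.choose k : ℂ) * poch a k * poch b (N-k) * (b + ((N:ℂ) - k)) := by
      intro k hk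
      have hkN : k ≤ N := Nat.lt_succ_iff.mp (Finset.mem_range.mp hk)
      have h1 : N + 1 - k = (N - k) + 1 := by omega
      rw [h1, poch_succ_right]
      have : ((N - k : ℕ) : ℂ) = (N:ℂ) - k := by
        push_cast [Nat.cast_sub hkN]; ring
      rw [this]
      ring
    have ha : ∀ j ∈ range (N+1),
        (N.choose j : ℂ) * poch a (j+1) * poch b (N-j) =
        (N.choose j : ℂ) * poch a j * poch b (N-j) * (a + j) := by
      intro j _
      rw [poch_succ_right]
      ring
    -- assemble
    have hzero : ((N+1).choose 0 : ℂ) * poch a 0 * poch b (N+1-0) = poch b (N+1) := by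
      simp [poch_zero]
    rw [hzero, Finset.sum_congr rfl ha]
    have : (∑ j ∈ range N, (N.choose (j+1) : ℂ) * poch a (j+1) * poch b (N-j)) + poch b (N+1) =
        ∑ k ∈ range (N+1), (N.choose k : ℂ) * poch a k * poch b (N-k) * (b + ((N:ℂ) - k)) := by
      rw [← hB', Finset.sum_congr rfl hab]
    rw [add_assoc, hB2, this, ← Finset.sum_add_distrib]
    have final : ∀ k ∈ range (N+1),
        (N.choose k : ℂ) * poch a k * poch b (N-k) * (a + k) +
        (N.choose k : ℂ) * poch a k * poch b (N-k) * (b + ((N:ℂ) - k)) =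
        (N.choose k : ℂ) * poch a k * poch b (N-k) * (a + b + N) := by
      intro k _
      ring
    rw [Finset.sum_congr rfl final, ← Finset.sum_mul, ih, ← poch_succ_right]

lemma vandW (a b : ℂ) (N : ℕ) :
    ∑ k ∈ range (N+1), (N.choose k : ℂ) * poch a k * poch b (N-k) * ((N-k : ℕ) : ℂ) =
    (N:ℂ) * b * poch (a+b+1) (N-1) := by
  cases N with
  | zero => simp
  | succ N =>
    rw [Finset.sum_range_succ]
    simp only [Nat.sub_self, Nat.cast_zero, mul_zero, add_zero]
    have hterm : ∀ k ∈ range (N+1),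
        ((N+1).choose k : ℂ) * poch a k * poch b (N+1-k) * ((N+1-k : ℕ) : ℂ) =
        ((N:ℂ)+1) * b * ((N.choose k : ℂ) * poch a k * poch (b+1) (N-k)) := by
      intro k hk
      have hkN : k ≤ N := Nat.lt_succ_iff.mp (Finset.mem_range.mp hk)
      have h1 : N + 1 - k = (N - k) + 1 := by omega
      have h3 : (N+1).choose k * (N+1-k) = N.choose k * (N+1) :=
        (Nat.choose_mul_succ_eq N k).symm
      have hch : ((N+1).choose k : ℂ) * ((N+1-k : ℕ) : ℂ) = (N.choose k : ℂ) * ((N:ℂ)+1) := by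
        calc ((N+1).choose k : ℂ) * ((N+1-k : ℕ) : ℂ)
            = (((N+1).choose k * (N+1-k) : ℕ) : ℂ) := by push_cast; ring
          _ = ((N.choose k * (N+1) : ℕ) : ℂ) := by rw [h3]
          _ = (N.choose k : ℂ) * ((N:ℂ)+1) := by push_cast; ring
      have hpoch : poch b (N+1-k) = b * poch (b+1) (N-k) := by
        rw [h1, poch_succ_left]
      rw [hpoch]
      linear_combination (poch a k * (b * poch (b+1) (N-k))) * hch
    rw [Finset.sum_congr rfl hterm, ← Finset.mul_sum, vand a (b+1) N]
    push_cast
    ring_nf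

lemma sum_mul_choose (i : ℕ) : ∑ r ∈ range (i+1), 2 * (r * i.choose r) = i * 2^i := by
  cases i with
  | zero => simp
  | succ i =>
    rw [Finset.sum_range_succ']
    simp only [Nat.zero_eq, mul_zero, zero_mul, add_zero]
    have hterm : ∀ j ∈ range (i+1), 2 * ((j+1) * (i+1).choose (j+1)) =
        2 * (i+1) * i.choose j := by
      intro j _
      have h := Nat.add_one_mul_choose_eq i j
      calc 2 * ((j+1) * (i+1).choose (j+1)) = 2 * ((i+1).choose (j+1) * (j+1)) := by ring
        _ = 2 * ((i+1) * i.choose j) := by rw [← h]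
        _ = 2 * (i+1) * i.choose j := by ring
    rw [Finset.sum_congr rfl hterm, ← Finset.mul_sum, Nat.sum_range_choose]
    ring

set_option maxHeartbeats 1000000 in
theorem stmt_7 (i : ℕ) (α β : ℂ)
    (hβ0 : β ≠ 0)
    (hβ : ∀ m n : ℕ, poch β (m + n) ≠ 0)
    (hd : ∀ n : ℕ, poch (α / 2) n ≠ 0)
    (hΓs : ∀ r : ℕ, r ≤ i →
      notNonposInt (β / 4 + ((r : ℂ) + 1) / 2) ∧ notNonposInt (β / 4 + ((r : ℂ) - 1) / 2))
    (hsum : Summable fun p : ℕ × ℕ => ‖kdfTerm α (β / 2 + 2 - (i : ℂ)) (β / 2 - 2 + (i : ℂ)) (α / 2 + 1) β (α / 2) (1/2) (1/2) p‖) :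
    (∑' p : ℕ × ℕ, kdfTerm α (β / 2 + 2 - (i : ℂ)) (β / 2 - 2 + (i : ℂ)) (α / 2 + 1) β (α / 2) (1/2) (1/2) p) =
      (2 : ℂ) ^ (α + 3 - (i : ℂ)) / β *
      ∑ r ∈ Finset.range (i + 1), (i.choose r : ℂ) *
        Gamma (β / 4 + ((r : ℂ) + 1) / 2) /
        Gamma (β / 4 + ((r : ℂ) - 1) / 2) := by
  set ε : ℂ := β / 2 + 2 - (i : ℂ) with hε_def
  set b1 : ℂ := β / 2 - 2 + (i : ℂ) with hb1_def
  set F : ℕ × ℕ → ℂ := kdfTerm α ε b1 (α / 2 + 1) β (α / 2) (1/2) (1/2) with hF_def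
  have h2ne : (2:ℂ) ≠ 0 := two_ne_zero
  have hα2 : α / 2 ≠ 0 := by
    have := hd 1
    simpa [poch] using this
  have hα : α ≠ 0 := fun h => hα2 (by rw [h]; norm_num)
  have hβN : ∀ N : ℕ, poch β N ≠ 0 := fun N => by simpa using hβ N 0
  have hεb : ε + b1 = β := by rw [hε_def, hb1_def]; ring
  -- Step B : value of each diagonal sum
  have hstepB : ∀ N : ℕ, ∑ kl ∈ Finset.HasAntidiagonal.antidiagonal N, F kl =
      poch α N / N.factorial * (1/2:ℂ)^N * (1 + 2*b1*(N:ℂ)/(α*β)) := by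
    intro N
    rw [Finset.Nat.sum_antidiagonal_eq_sum_range_succ_mk]
    have hterm : ∀ k ∈ range (N+1), F (k, N-k) =
        (poch α N * (1/2:ℂ)^N / (poch β N * N.factorial * (α/2))) *
          ((N.choose k : ℂ) * poch ε k * (poch b1 (N-k) * (α/2 + ((N-k:ℕ):ℂ)))) := by
      intro k hk
      have hkN : k ≤ N := Nat.lt_succ_iff.mp (Finset.mem_range.mp hk)
      have hadd : k + (N - k) = N := by omega
      have hfact : ((N.choose k : ℕ) : ℂ) * (k.factorial : ℂ) * ((N-k).factorial : ℂ)
          = (N.factorial : ℂ) := by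
        exact_mod_cast congrArg (Nat.cast : ℕ → ℂ)
          (Nat.choose_mul_factorial_mul_factorial hkN)
      have hpow : (1/2:ℂ)^k * (1/2:ℂ)^(N-k) = (1/2:ℂ)^N := by
        rw [← pow_add, hadd]
      have hpoch2 : poch (α/2+1) (N-k) * (α/2) = poch (α/2) (N-k) * (α/2 + ((N-k:ℕ):ℂ)) := by
        have h1 := poch_succ_left (α/2) (N-k)
        have h2 := poch_succ_right (α/2) (N-k)
        rw [h2] at h1
        linear_combination -h1
      have e1 : F (k, N-k) =
          poch α N * poch ε k * poch b1 (N-k) * poch (α/2+1) (N-k) /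
            (poch β N * poch (α/2) (N-k)) * (1/2:ℂ)^N /
            ((k.factorial : ℂ) * ((N-k).factorial : ℂ)) := by
        rw [hF_def]
        simp only [kdfTerm, hadd]
        rw [mul_assoc, hpow]
      rw [e1]
      have hfk : (k.factorial : ℂ) ≠ 0 := Nat.cast_ne_zero.mpr k.factorial_ne_zero
      have hfnk : ((N-k).factorial : ℂ) ≠ 0 := Nat.cast_ne_zero.mpr (N-k).factorial_ne_zero
      have hfN : (N.factorial : ℂ) ≠ 0 := Nat.cast_ne_zero.mpr N.factorial_ne_zero
      have hpβ := hβN N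
      have hpd := hd (N-k)
      rw [div_mul_eq_mul_div, div_div, div_mul_eq_mul_div,
        div_eq_div_iff
          (mul_ne_zero (mul_ne_zero hpβ hpd) (mul_ne_zero hfk hfnk))
          (mul_ne_zero (mul_ne_zero hpβ hfN) hα2)]
      linear_combination
        (poch α N * poch ε k * poch b1 (N-k) * (1/2:ℂ)^N * poch β N * (N.factorial:ℂ)) * hpoch2
        - (poch α N * poch ε k * poch b1 (N-k) * (1/2:ℂ)^N * poch β N *
            (α/2 + ((N-k:ℕ):ℂ)) * poch (α/2) (N-k)) * hfact
    rw [Finset.sum_congr rfl hterm, ← Finset.mul_sum]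
    have hsplit : ∀ k ∈ range (N+1),
        (N.choose k : ℂ) * poch ε k * (poch b1 (N-k) * (α/2 + ((N-k:ℕ):ℂ))) =
        (α/2) * ((N.choose k : ℂ) * poch ε k * poch b1 (N-k)) +
        (N.choose k : ℂ) * poch ε k * poch b1 (N-k) * ((N-k:ℕ):ℂ) := by
      intro k _
      ring
    rw [Finset.sum_congr rfl hsplit, Finset.sum_add_distrib, ← Finset.mul_sum]
    rw [vand ε b1 N, vandW ε b1 N, hεb]
    have hshift : (N:ℂ) * poch (β+1) (N-1) * β = (N:ℂ) * poch β N := by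
      cases N with
      | zero => simp
      | succ M =>
        rw [Nat.add_sub_cancel, poch_succ_left]
        ring
    have hfN : (N.factorial : ℂ) ≠ 0 := Nat.cast_ne_zero.mpr N.factorial_ne_zero
    have hpβ := hβN N
    have key2 : (α/2) * poch β N + (N:ℂ)*b1*poch (β+1) (N-1) =
        poch β N * (α*β + 2*b1*(N:ℂ)) / (2*β) := by
      rw [eq_div_iff (mul_ne_zero h2ne hβ0)]
      linear_combination (2*b1) * hshift
    rw [key2]
    generalize (1/2:ℂ)^N = y
    field_simp
  -- summability and regrouping
  have hsum' : Summable F := hsum.of_norm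
  have hregroup : (∑' p : ℕ × ℕ, F p) = ∑' N : ℕ, ∑ kl ∈ Finset.HasAntidiagonal.antidiagonal N, F kl := by
    have h2sig : Summable (F ∘ Finset.HasAntidiagonal.sigmaAntidiagonalEquivProd) :=
      Finset.HasAntidiagonal.sigmaAntidiagonalEquivProd.summable_iff.mpr hsum'
    have hts := Summable.tsum_sigma'
      (f := fun x : (Σ n : ℕ, {p : ℕ × ℕ // p ∈ Finset.HasAntidiagonal.antidiagonal n}) =>
        F (Finset.HasAntidiagonal.sigmaAntidiagonalEquivProd x))
      (fun n => (hasSum_fintype _).summable) h2sig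
    rw [← Finset.HasAntidiagonal.sigmaAntidiagonalEquivProd.tsum_eq F, hts]
    exact tsum_congr fun N => by
      rw [tsum_fintype]
      exact Finset.sum_coe_sort (Finset.HasAntidiagonal.antidiagonal N) F
  -- Step C: the series value
  have hT := hasSum_binomial α
  have hU : HasSum (fun N : ℕ => poch α N / N.factorial * (1/2:ℂ)^N * (N:ℂ)) (α * (2:ℂ)^α) := by
    have h1 := (hasSum_binomial (α+1)).mul_left (α/2)
    have heq : (fun N : ℕ => α/2 * (poch (α+1) N / N.factorial * (1/2:ℂ)^N)) =
        (fun N : ℕ => poch α (N+1) / (N+1).factorial * (1/2:ℂ)^(N+1) * (((N+1):ℕ):ℂ)) := by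
      funext N
      have hfN : (N.factorial : ℂ) ≠ 0 := Nat.cast_ne_zero.mpr N.factorial_ne_zero
      have hN1 : ((N:ℂ)+1) ≠ 0 := Nat.cast_add_one_ne_zero N
      have hcast : ((N+1).factorial : ℂ) = ((N:ℂ)+1) * (N.factorial : ℂ) := by
        rw [Nat.factorial_succ]; push_cast; ring
      rw [poch_succ_left, hcast, pow_succ]
      push_cast
      field_simp
    rw [heq] at h1
    have h4 := (hasSum_nat_add_iff
      (f := fun N : ℕ => poch α N / N.factorial * (1/2:ℂ)^N * (N:ℂ)) 1).mp h1
    have hv : α/2 * (2:ℂ)^(α+1) +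
        (∑ x ∈ range 1, poch α x / x.factorial * (1/2:ℂ)^x * (x:ℂ)) = α * (2:ℂ)^α := by
      rw [Finset.sum_range_one]
      simp only [Nat.cast_zero, mul_zero, add_zero]
      rw [Complex.cpow_add _ _ h2ne, Complex.cpow_one]
      ring
    rwa [hv] at h4
  have hA : HasSum (fun N : ℕ => poch α N / N.factorial * (1/2:ℂ)^N * (1 + 2*b1*(N:ℂ)/(α*β)))
      ((2:ℂ)^α + 2*b1/(α*β) * (α * (2:ℂ)^α)) := by
    have hadd := hT.add (hU.mul_left (2*b1/(α*β)))
    have heq : (fun N : ℕ => poch α N / N.factorial * (1/2:ℂ)^N +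
        2*b1/(α*β) * (poch α N / N.factorial * (1/2:ℂ)^N * (N:ℂ))) =
        (fun N : ℕ => poch α N / N.factorial * (1/2:ℂ)^N * (1 + 2*b1*(N:ℂ)/(α*β))) := by
      funext N
      ring
    rwa [heq] at hadd
  have hLHS : (∑' p : ℕ × ℕ, F p) = (2:ℂ)^α + 2*b1/(α*β) * (α * (2:ℂ)^α) := by
    rw [hregroup, tsum_congr hstepB, hA.tsum_eq]
  -- RHS : Gamma quotients
  have hΓ : ∀ r ∈ range (i+1),
      (i.choose r : ℂ) * Gamma (β/4+((r:ℂ)+1)/2) / Gamma (β/4+((r:ℂ)-1)/2) =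
      (i.choose r : ℂ) * (β/4 + ((r:ℂ)-1)/2) := by
    intro r hr
    have hri : r ≤ i := Nat.lt_succ_iff.mp (Finset.mem_range.mp hr)
    obtain ⟨h₁, h₂⟩ := hΓs r hri
    have hz0 : β/4 + ((r:ℂ)-1)/2 ≠ 0 := by simpa using h₂ 0
    have hzΓ : Gamma (β/4 + ((r:ℂ)-1)/2) ≠ 0 := Complex.Gamma_ne_zero h₂
    have harg : β/4+((r:ℂ)+1)/2 = (β/4 + ((r:ℂ)-1)/2) + 1 := by ring
    rw [harg, Complex.Gamma_add_one _ hz0]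
    rw [show (i.choose r : ℂ) * ((β/4+((r:ℂ)-1)/2) * Gamma (β/4+((r:ℂ)-1)/2)) =
      ((i.choose r : ℂ) * (β/4+((r:ℂ)-1)/2)) * Gamma (β/4+((r:ℂ)-1)/2) from by ring]
    exact mul_div_cancel_right₀ _ hzΓ
  rw [hLHS, Finset.sum_congr rfl hΓ]
  -- evaluate the finite sum
  have h1 : (∑ r ∈ range (i+1), (i.choose r : ℂ)) = (2:ℂ)^(i:ℕ) := by
    calc (∑ r ∈ range (i+1), (i.choose r : ℂ))
        = ((∑ r ∈ range (i+1), i.choose r : ℕ) : ℂ) := by push_cast; rfl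
      _ = ((2^i : ℕ) : ℂ) := by rw [Nat.sum_range_choose]
      _ = (2:ℂ)^(i:ℕ) := by push_cast; rfl
  have h2 : (∑ r ∈ range (i+1), (r:ℂ) * (i.choose r : ℂ)) * 2 = (i:ℂ) * (2:ℂ)^(i:ℕ) := by
    have hc := congrArg (Nat.cast : ℕ → ℂ) (sum_mul_choose i)
    push_cast at hc
    calc (∑ r ∈ range (i+1), (r:ℂ) * (i.choose r : ℂ)) * 2
        = ∑ r ∈ range (i+1), 2 * ((r:ℂ) * (i.choose r : ℂ)) := by
          rw [Finset.sum_mul]; congr 1; funext r; ring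
      _ = (i:ℂ) * (2:ℂ)^(i:ℕ) := by rw [hc]
  have hsum_eval : ∑ r ∈ range (i+1), (i.choose r : ℂ) * (β/4 + ((r:ℂ)-1)/2) =
      (2:ℂ)^(i:ℕ) * (β-2)/4 + (i:ℂ) * (2:ℂ)^(i:ℕ)/4 := by
    have hsplit : ∀ r ∈ range (i+1), (i.choose r : ℂ) * (β/4 + ((r:ℂ)-1)/2) =
        (i.choose r : ℂ) * ((β-2)/4) + ((r:ℂ) * (i.choose r : ℂ))/2 := fun r _ => by ring
    rw [Finset.sum_congr rfl hsplit, Finset.sum_add_distrib, ← Finset.sum_mul,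
      ← Finset.sum_div, h1]
    linear_combination h2 / 4
  rw [hsum_eval]
  -- final power juggling
  have hpow2 : (2:ℂ)^(α+3-(i:ℂ)) * (2:ℂ)^(i:ℕ) = (2:ℂ)^α * 8 := by
    rw [show ((2:ℂ)^(i:ℕ)) = (2:ℂ)^((i:ℕ):ℂ) from (Complex.cpow_natCast 2 i).symm,
      ← Complex.cpow_add _ _ h2ne,
      show α + 3 - (i:ℂ) + (i:ℂ) = α + (3:ℂ) by ring,
      Complex.cpow_add _ _ h2ne,
      show (3:ℂ) = ((3:ℕ):ℂ) by norm_num, Complex.cpow_natCast]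
    norm_num
  have h2i : (2:ℂ)^(i:ℕ) ≠ 0 := pow_ne_zero _ h2ne
  rw [hb1_def]
  rw [show (2:ℂ)^(α+3-(i:ℂ)) / β * ((2:ℂ)^(i:ℕ)*(β-2)/4 + (i:ℂ)*(2:ℂ)^(i:ℕ)/4) =
      (2:ℂ)^α*8/β*((β-2)/4 + (i:ℂ)/4) by rw [← hpow2]; ring]
  field_simp
  ring
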